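/- Let G̃ be the subgroup of Aut(ℂⁿ) generated by G^r_β and all translations. Then the map ρ : ℂⁿ × G^r_β → G̃, (z,P) ↦ θ_z ∘ P, is a bijection, and under this bijection the group law reads (z,P)·(w,Q) = (z + P(w), θ_{−P(w)} ∘ P ∘ θ_w ∘ Q). -/

import Mathlib

open Finset

noncomputable section

/-- `bpow β p = ∏ᵢ βᵢ ^ pᵢ`. -/
def bpow {n : ℕ} (β : Fin n → ℂ) (p : Fin n → ℕ) : ℂ := ∏ i, β i ^ p i

/-- `𝒫ⱼ`: the set of resonances of `βⱼ`, i.e. `p ∈ ℕⁿ` with `βⱼ = β^p` and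
`p ≠ eₖ` for all `k ≥ j`. -/
def resSet {n : ℕ} (β : Fin n → ℂ) (j : Fin n) : Set (Fin n → ℕ) :=
  {p | β j = bpow β p ∧ ∀ k : Fin n, j ≤ k → p ≠ fun i => if i = k then 1 else 0}

/-- `𝒬ⱼ`: the set of nonzero multi-indices componentwise bounded by some
resonance of `βⱼ`. -/
def subResSet {n : ℕ} (β : Fin n → ℂ) (j : Fin n) : Set (Fin n → ℕ) :=
  {q | q ≠ 0 ∧ ∃ p ∈ resSet β j, ∀ l, q l ≤ p l}

/-- A map `P : ℂⁿ → ℂⁿ` is β sub-resonant if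
`P(z) = (a₁z₁, a₂z₂ + P₂(z₁), ..., aₙzₙ + Pₙ(z₁,...,z_{n-1}))` with all `aⱼ ≠ 0`
and each `Pⱼ` a linear combination of monomials `z^q` with `q ∈ 𝒬ⱼ` depending
only on the variables `z₁, ..., z_{j-1}`. -/
def IsSubResonant {n : ℕ} (β : Fin n → ℂ) (P : (Fin n → ℂ) → (Fin n → ℂ)) : Prop :=
  ∃ (a : Fin n → ℂ) (c : Fin n → ((Fin n → ℕ) →₀ ℂ)),
    (∀ j, a j ≠ 0) ∧
    (∀ j q, c j q ≠ 0 → q ∈ subResSet β j ∧ ∀ i, j ≤ i → q i = 0) ∧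
    ∀ (z : Fin n → ℂ) (j : Fin n),
      P z j = a j * z j + (c j).sum fun q coef => coef * ∏ i, z i ^ q i

namespace SubResAux

variable {n : ℕ}

/-- evaluation of a formal polynomial (an element of the additive monoid algebra
on multi-indices) at a point `z`. -/
def ev (z : Fin n → ℂ) : AddMonoidAlgebra ℂ (Fin n → ℕ) →+* ℂ :=
  AddMonoidAlgebra.liftNCRingHom (RingHom.id ℂ)
    { toFun := fun q => ∏ i, z i ^ (Multiplicative.toAdd q) i
      map_one' := by simp
      map_mul' := fun q q' => by
        simp [toAdd_mul, pow_add, Finset.prod_mul_distrib] }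
    fun x y => Commute.all _ _

lemma ev_single (z : Fin n → ℂ) (q : Fin n → ℕ) (a : ℂ) :
    ev z (AddMonoidAlgebra.single q a) = a * ∏ i, z i ^ q i := by
  simp [ev, AddMonoidAlgebra.liftNCRingHom, AddMonoidAlgebra.liftNC_single]

lemma ev_apply (z : Fin n → ℂ) (c : (Fin n → ℕ) →₀ ℂ) :
    ev z (AddMonoidAlgebra.ofCoeff c) = c.sum fun q a => a * ∏ i, z i ^ q i := by
  conv_lhs => rw [← Finsupp.sum_single c, AddMonoidAlgebra.ofCoeff_finsuppSum]
  rw [map_finsuppSum]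
  exact Finsupp.sum_congr fun q hq => ev_single z q (c q)

lemma ev_apply' (z : Fin n → ℂ) (D : AddMonoidAlgebra ℂ (Fin n → ℕ)) :
    ev z D = D.coeff.sum fun q a => a * ∏ i, z i ^ q i := by
  rw [← ev_apply]

lemma bpow_add (β : Fin n → ℂ) (p q : Fin n → ℕ) :
    bpow β (p + q) = bpow β p * bpow β q := by
  simp [bpow, Pi.add_apply, pow_add, Finset.prod_mul_distrib]

lemma bpow_delta (β : Fin n → ℂ) (i : Fin n) :
    bpow β (fun l => if l = i then 1 else 0) = β i := by
  rw [bpow, Finset.prod_eq_single i] <;> simp +contextual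

lemma add_ne_delta {a b : Fin n → ℕ} (ha : a ≠ 0) (hb : b ≠ 0) (k : Fin n) :
    a + b ≠ fun i => if i = k then 1 else 0 := by
  intro h
  obtain ⟨i, hi⟩ := Function.ne_iff.mp ha
  obtain ⟨i', hi'⟩ := Function.ne_iff.mp hb
  simp only [Pi.zero_apply] at hi hi'
  have h1 := congrFun h i
  have h2 := congrFun h i'
  simp only [Pi.add_apply] at h1 h2
  by_cases e1 : i = k
  · by_cases e2 : i' = k
    · subst e1; subst e2; simp at h1; omega
    · rw [if_neg e2] at h2; omega
  · rw [if_neg e1] at h1; omega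

/-- sub-resonant monomial data with a tracked eigenvalue product `μ`. -/
def GoodM (β : Fin n → ℂ) (j : Fin n) (μ : ℂ) (r : Fin n → ℕ) : Prop :=
  r ≠ 0 ∧ (∀ l, j ≤ l → r l = 0) ∧
    ∃ p : Fin n → ℕ, (∀ l, r l ≤ p l) ∧ bpow β p = μ ∧ p ≠ 0 ∧
      ∀ k, j ≤ k → p ≠ fun i => if i = k then 1 else 0

def GoodM' (β : Fin n → ℂ) (j : Fin n) (μ : ℂ) (r : Fin n → ℕ) : Prop :=
  (μ = 1 ∧ r = 0) ∨ GoodM β j μ r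

lemma goodM_mul {β : Fin n → ℂ} {j : Fin n} {μ1 μ2 : ℂ} {r1 r2 : Fin n → ℕ}
    (h1 : GoodM β j μ1 r1) (h2 : GoodM β j μ2 r2) : GoodM β j (μ1 * μ2) (r1 + r2) := by
  obtain ⟨hr1, hs1, p1, hle1, hb1, hp1, hd1⟩ := h1
  obtain ⟨hr2, hs2, p2, hle2, hb2, hp2, hd2⟩ := h2
  refine ⟨?_, ?_, p1 + p2, ?_, ?_, ?_, ?_⟩
  · obtain ⟨i, hi⟩ := Function.ne_iff.mp hr1
    exact Function.ne_iff.mpr ⟨i, by simp only [Pi.add_apply, Pi.zero_apply] at hi ⊢; omega⟩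
  · intro l hl; simp only [Pi.add_apply]; rw [hs1 l hl, hs2 l hl]
  · intro l; simp only [Pi.add_apply]; exact Nat.add_le_add (hle1 l) (hle2 l)
  · rw [← hb1, ← hb2, ← bpow_add]
  · obtain ⟨i, hi⟩ := Function.ne_iff.mp hp1
    exact Function.ne_iff.mpr ⟨i, by simp only [Pi.add_apply, Pi.zero_apply] at hi ⊢; omega⟩
  · intro k _; exact add_ne_delta hp1 hp2 k

lemma goodM_mul' {β : Fin n → ℂ} {j : Fin n} {μ1 μ2 : ℂ} {r1 r2 : Fin n → ℕ}
    (h1 : GoodM β j μ1 r1) (h2 : GoodM' β j μ2 r2) : GoodM β j (μ1 * μ2) (r1 + r2) := by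
  rcases h2 with ⟨rfl, rfl⟩ | h2
  · simpa using h1
  · exact goodM_mul h1 h2

lemma goodM'_mul {β : Fin n → ℂ} {j : Fin n} {μ1 μ2 : ℂ} {r1 r2 : Fin n → ℕ}
    (h1 : GoodM' β j μ1 r1) (h2 : GoodM' β j μ2 r2) : GoodM' β j (μ1 * μ2) (r1 + r2) := by
  rcases h1 with ⟨rfl, rfl⟩ | h1
  · simpa using h2
  · exact Or.inr (goodM_mul' h1 h2)

lemma mem_support_one {m : Fin n → ℕ} (h : m ∈ (1 : AddMonoidAlgebra ℂ (Fin n → ℕ)).coeff.support) :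
    m = 0 := by
  rw [AddMonoidAlgebra.one_def, AddMonoidAlgebra.coeff_single] at h
  simpa using Finsupp.support_single_subset h

lemma mem_support_mul {F G : AddMonoidAlgebra ℂ (Fin n → ℕ)} {m : Fin n → ℕ}
    (h : m ∈ (F * G).coeff.support) :
    ∃ m1 ∈ F.coeff.support, ∃ m2 ∈ G.coeff.support, m1 + m2 = m := by
  classical
  have := AddMonoidAlgebra.support_coeff_mul_subset F G h
  rwa [Finset.mem_add] at this

lemma goodM'_pow {β : Fin n → ℂ} {j : Fin n} {μ : ℂ} {F : AddMonoidAlgebra ℂ (Fin n → ℕ)}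
    (hF : ∀ m ∈ F.coeff.support, GoodM' β j μ m) (k : ℕ) :
    ∀ m ∈ (F ^ k).coeff.support, GoodM' β j (μ ^ k) m := by
  induction k with
  | zero => intro m hm; rw [pow_zero] at hm; exact Or.inl ⟨by rw [pow_zero], mem_support_one hm⟩
  | succ k ih =>
    intro m hm
    rw [pow_succ] at hm
    obtain ⟨m1, hm1, m2, hm2, rfl⟩ := mem_support_mul hm
    rw [pow_succ]
    exact goodM'_mul (ih m1 hm1) (hF m2 hm2)

lemma goodM_pow {β : Fin n → ℂ} {j : Fin n} {μ : ℂ} {F : AddMonoidAlgebra ℂ (Fin n → ℕ)}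
    (hF : ∀ m ∈ F.coeff.support, GoodM β j μ m) {k : ℕ} (hk : k ≠ 0) :
    ∀ m ∈ (F ^ k).coeff.support, GoodM β j (μ ^ k) m := by
  obtain ⟨k, rfl⟩ := Nat.exists_eq_succ_of_ne_zero hk
  intro m hm
  rw [pow_succ] at hm
  obtain ⟨m1, hm1, m2, hm2, rfl⟩ := mem_support_mul hm
  rw [pow_succ', add_comm m1 m2]
  exact goodM_mul' (hF m2 hm2) (goodM'_pow (fun m h => Or.inr (hF m h)) k m1 hm1)

lemma goodM'_prod {ι : Type*} {β : Fin n → ℂ} {j : Fin n} (s : Finset ι)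
    (F : ι → AddMonoidAlgebra ℂ (Fin n → ℕ)) (μf : ι → ℂ)
    (h : ∀ i ∈ s, ∀ m ∈ (F i).coeff.support, GoodM' β j (μf i) m) :
    ∀ m ∈ (∏ i ∈ s, F i).coeff.support, GoodM' β j (∏ i ∈ s, μf i) m := by
  classical
  induction s using Finset.induction_on with
  | empty => intro m hm; simp only [Finset.prod_empty] at hm ⊢
             exact Or.inl ⟨rfl, mem_support_one hm⟩
  | insert x s' hx ih =>
    intro m hm
    rw [Finset.prod_insert hx] at hm
    obtain ⟨m1, hm1, m2, hm2, rfl⟩ := mem_support_mul hm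
    rw [Finset.prod_insert hx]
    exact goodM'_mul (h x (Finset.mem_insert_self x s') m1 hm1)
      (ih (fun i hi => h i (Finset.mem_insert_of_mem hi)) m2 hm2)

/-- The substitution lemma: substituting a sub-resonant map into a polynomial
with monomials in `𝒬ⱼ` (in the variables `z₁, ..., z_{j-1}`) yields another
such polynomial. -/
lemma subst_poly {β : Fin n → ℂ} (h1 : ∀ i, ‖β i‖ < 1) (j : Fin n)
    (c : (Fin n → ℕ) →₀ ℂ)
    (hc : ∀ q, c q ≠ 0 → q ∈ subResSet β j ∧ ∀ i, j ≤ i → q i = 0)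
    {Q : (Fin n → ℂ) → (Fin n → ℂ)} (hQ : IsSubResonant β Q) :
    ∃ c' : (Fin n → ℕ) →₀ ℂ,
      (∀ r, c' r ≠ 0 → r ∈ subResSet β j ∧ ∀ i, j ≤ i → r i = 0) ∧
      ∀ z, (c.sum fun q coef => coef * ∏ i, Q z i ^ q i)
          = c'.sum fun q coef => coef * ∏ i, z i ^ q i := by
  classical
  obtain ⟨b, d, hb, hd, hQeq⟩ := hQ
  set Ri : Fin n → AddMonoidAlgebra ℂ (Fin n → ℕ) :=
    fun i => AddMonoidAlgebra.single (fun l => if l = i then 1 else 0) (b i)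
        + AddMonoidAlgebra.ofCoeff (d i) with hRidef
  have hRi : ∀ (z : Fin n → ℂ) (i : Fin n), ev z (Ri i) = Q z i := by
    intro z i
    rw [hRidef, map_add, ev_single, ev_apply, hQeq z i]
    exact congrArg (· + _) (congrArg (b i * ·) (bpow_delta z i))
  set Fq : (Fin n → ℕ) → AddMonoidAlgebra ℂ (Fin n → ℕ) :=
    fun q => ∏ i, (Ri i) ^ q i with hFqdef
  have hFq : ∀ (z : Fin n → ℂ) q, ev z (Fq q) = ∏ i, Q z i ^ q i := by
    intro z q
    rw [hFqdef, map_prod]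
    exact Finset.prod_congr rfl fun i _ => by rw [map_pow, hRi]
  -- the base estimate on the factors
  have hbase : ∀ i : Fin n, i < j → ∀ m ∈ (Ri i).coeff.support, GoodM β j (β i) m := by
    intro i hij m hm
    have := Finsupp.support_add hm
    rw [Finset.mem_union] at this
    rcases this with hm' | hm'
    · have hmδ : m = fun l => if l = i then 1 else 0 := by
        simpa using Finsupp.support_single_subset hm'
      subst hmδ
      refine ⟨Function.ne_iff.mpr ⟨i, by simp⟩, ?_, (fun l => if l = i then 1 else 0),
        fun l => le_rfl, bpow_delta β i, Function.ne_iff.mpr ⟨i, by simp⟩, ?_⟩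
      · intro l hl
        have : l ≠ i := fun h => absurd (h ▸ hl) (not_le.mpr (h ▸ hij))
        simp [this]
      · intro k hk h
        have := congrFun h i
        simp only [if_pos rfl] at this
        have hik : i ≠ k := fun h' => absurd (h' ▸ hk) (not_le.mpr (h' ▸ hij))
        rw [if_neg hik] at this
        exact one_ne_zero this
    · obtain ⟨⟨hm0, p, ⟨hpb, hpd⟩, hmlep⟩, hms⟩ := hd i m (Finsupp.mem_support_iff.mp hm')
      refine ⟨hm0, ?_, p, hmlep, hpb.symm, ?_, ?_⟩
      · intro l hl; exact hms l (le_of_lt (lt_of_lt_of_le hij hl))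
      · rintro rfl
        have hβ : β i = 1 := by simpa [bpow] using hpb
        exact absurd (h1 i) (not_lt.mpr (by rw [hβ]; simp))
      · intro k hk
        exact hpd k (le_of_lt (lt_of_lt_of_le hij hk))
  -- the key support estimate for `Fq q`
  have hkey : ∀ q, c q ≠ 0 → ∀ m ∈ (Fq q).coeff.support, GoodM β j (bpow β q) m := by
    intro q hq m hm
    obtain ⟨⟨hq0, p, hpres, hqlep⟩, hqsupp⟩ := hc q hq
    obtain ⟨i0, hi0⟩ := Function.ne_iff.mp hq0
    simp only [Pi.zero_apply] at hi0
    have hi0j : i0 < j := by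
      by_contra hcon
      exact hi0 (hqsupp i0 (le_of_not_gt hcon))
    simp only [hFqdef] at hm
    rw [← Finset.mul_prod_erase Finset.univ (fun i => Ri i ^ q i) (Finset.mem_univ i0)] at hm
    obtain ⟨m1, hm1, m2, hm2, rfl⟩ := mem_support_mul hm
    have hG1 : GoodM β j (β i0 ^ q i0) m1 :=
      goodM_pow (hbase i0 hi0j) hi0 m1 hm1
    have hG2 : GoodM' β j (∏ i ∈ Finset.univ.erase i0, β i ^ q i) m2 := by
      refine goodM'_prod _ _ _ (fun i _ m hm => ?_) m2 hm2
      by_cases hqi : q i = 0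
      · rw [hqi, pow_zero] at hm ⊢
        exact Or.inl ⟨rfl, mem_support_one hm⟩
      · have hij : i < j := by
          by_contra hcon
          exact hqi (hqsupp i (le_of_not_gt hcon))
        exact Or.inr (goodM_pow (hbase i hij) hqi m hm)
    have := goodM_mul' hG1 hG2
    rwa [Finset.mul_prod_erase Finset.univ (fun i => β i ^ q i) (Finset.mem_univ i0)] at this
  -- assemble the new coefficient family
  set c' : AddMonoidAlgebra ℂ (Fin n → ℕ) :=
    ∑ q ∈ c.support, AddMonoidAlgebra.single (0 : Fin n → ℕ) (c q) * Fq q with hc'def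
  refine ⟨c'.coeff, ?_, ?_⟩
  · intro r hr
    have hr' : r ∈ c'.coeff.support := Finsupp.mem_support_iff.mpr hr
    rw [hc'def, AddMonoidAlgebra.coeff_sum] at hr'
    obtain ⟨q, hqmem, hrq⟩ := Finsupp.mem_support_finset_sum r hr'
    obtain ⟨m1, hm1, m2, hm2, rfl⟩ := mem_support_mul hrq
    have hm10 : m1 = 0 := by simpa using Finsupp.support_single_subset hm1
    subst hm10
    rw [zero_add]
    have hq : c q ≠ 0 := Finsupp.mem_support_iff.mp hqmem
    obtain ⟨hm0, hmsupp, p'', hlep, hbp, hp0, hpd⟩ := hkey q hq m2 hm2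
    obtain ⟨⟨hq0, p, ⟨hpres1, hpres2⟩, hqlep⟩, hqsupp⟩ := hc q hq
    refine ⟨⟨hm0, p'' + fun l => p l - q l, ⟨?_, ?_⟩, ?_⟩, hmsupp⟩
    · -- β j = bpow β (p'' + (p - q))
      rw [bpow_add, hbp]
      have e3 : bpow β q * bpow β (fun l => p l - q l) = bpow β p := by
        rw [bpow, bpow, bpow, ← Finset.prod_mul_distrib]
        exact Finset.prod_congr rfl fun i _ => by
          rw [← pow_add, Nat.add_sub_cancel' (hqlep i)]
      rw [e3]; exact hpres1
    · -- ≠ δ k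
      intro k hk
      by_cases hpq : (fun l => p l - q l) = (0 : Fin n → ℕ)
      · have : p'' + (fun l => p l - q l) = p'' := by
          funext l
          have := congrFun hpq l
          simp only [Pi.zero_apply] at this
          simp [Pi.add_apply, this]
        rw [this]
        exact hpd k hk
      · exact add_ne_delta hp0 hpq k
    · intro l
      exact le_trans (hlep l) (by simp only [Pi.add_apply]; omega)
  · intro z
    have : ev z c' = c.sum fun q coef => coef * ∏ i, Q z i ^ q i := by
      rw [hc'def, map_sum]
      rw [Finsupp.sum]
      refine Finset.sum_congr rfl fun q hq => ?_
      rw [map_mul, ev_single, hFq]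
      simp
    rw [← this, ev_apply']
section
variable {n : ℕ}

lemma prod_zero_pow {q : Fin n → ℕ} (hq : q ≠ 0) : ∏ i, (0 : ℂ) ^ q i = 0 := by
  obtain ⟨i, hi⟩ := Function.ne_iff.mp hq
  simp only [Pi.zero_apply] at hi
  exact Finset.prod_eq_zero (Finset.mem_univ i) (zero_pow hi)

lemma ev_zero (D : AddMonoidAlgebra ℂ (Fin n → ℕ)) : ev (fun _ => (0:ℂ)) D = D.coeff 0 := by
  classical
  rw [ev_apply', Finsupp.sum]
  by_cases h0 : (0 : Fin n → ℕ) ∈ D.coeff.support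
  · rw [Finset.sum_eq_single_of_mem 0 h0 (fun q _ hq => by rw [prod_zero_pow hq, mul_zero])]
    simp
  · rw [Finset.sum_eq_zero (fun q hq => by
      rw [prod_zero_pow (fun h => h0 (h ▸ hq)), mul_zero])]
    exact (Finsupp.notMem_support_iff.mp h0).symm

lemma bound_pow {F : AddMonoidAlgebra ℂ (Fin n → ℕ)} {bnd : Fin n → ℕ}
    (h : ∀ m ∈ F.coeff.support, ∀ l, m l ≤ bnd l) (k : ℕ) :
    ∀ m ∈ (F ^ k).coeff.support, ∀ l, m l ≤ k * bnd l := by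
  induction k with
  | zero => intro m hm l; rw [pow_zero] at hm; rw [mem_support_one hm]; simp
  | succ k ih =>
    intro m hm l
    rw [pow_succ] at hm
    obtain ⟨m1, hm1, m2, hm2, rfl⟩ := mem_support_mul hm
    have := ih m1 hm1 l
    have := h m2 hm2 l
    simp only [Pi.add_apply]
    calc m1 l + m2 l ≤ k * bnd l + bnd l := by omega
    _ = (k+1) * bnd l := by ring

lemma bound_prod {ι : Type*} (s : Finset ι) (F : ι → AddMonoidAlgebra ℂ (Fin n → ℕ))
    (bnd : ι → Fin n → ℕ) (h : ∀ i ∈ s, ∀ m ∈ (F i).coeff.support, ∀ l, m l ≤ bnd i l) :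
    ∀ m ∈ (∏ i ∈ s, F i).coeff.support, ∀ l, m l ≤ ∑ i ∈ s, bnd i l := by
  classical
  induction s using Finset.induction_on with
  | empty => intro m hm l; rw [Finset.prod_empty] at hm; rw [mem_support_one hm]; simp
  | insert x s' hx ih =>
    intro m hm l
    rw [Finset.prod_insert hx] at hm
    obtain ⟨m1, hm1, m2, hm2, rfl⟩ := mem_support_mul hm
    have h1' := h x (Finset.mem_insert_self x s') m1 hm1 l
    have h2' := ih (fun i hi => h i (Finset.mem_insert_of_mem hi)) m2 hm2 l
    rw [Finset.sum_insert hx]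
    simp only [Pi.add_apply]
    omega

/-- The translation lemma: recentered translates of a sub-resonant polynomial
are again of the same shape. -/
lemma transl_poly {β : Fin n → ℂ} (j : Fin n) (c : (Fin n → ℕ) →₀ ℂ)
    (hc : ∀ q, c q ≠ 0 → q ∈ subResSet β j ∧ ∀ i, j ≤ i → q i = 0)
    (w : Fin n → ℂ) :
    ∃ c' : (Fin n → ℕ) →₀ ℂ,
      (∀ r, c' r ≠ 0 → r ∈ subResSet β j ∧ ∀ i, j ≤ i → r i = 0) ∧
      ∀ z : Fin n → ℂ, (c.sum fun q coef => coef * ∏ i, (z i + w i) ^ q i)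
            - (c.sum fun q coef => coef * ∏ i, w i ^ q i)
          = c'.sum fun q coef => coef * ∏ i, z i ^ q i := by
  classical
  set Xi : Fin n → AddMonoidAlgebra ℂ (Fin n → ℕ) := fun i =>
    AddMonoidAlgebra.single (fun l => if l = i then 1 else 0) (1:ℂ)
      + AddMonoidAlgebra.single 0 (w i) with hXidef
  have hXi : ∀ (z : Fin n → ℂ) (i : Fin n), ev z (Xi i) = z i + w i := by
    intro z i
    rw [hXidef, map_add, ev_single, ev_single]
    simp only [one_mul]
    rw [show (∏ l, z l ^ (if l = i then 1 else 0)) = z i from bpow_delta z i]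
    simp [Pi.zero_apply]
  have hXisupp : ∀ i : Fin n, ∀ m ∈ (Xi i).coeff.support, ∀ l,
      m l ≤ (fun l' => if l' = i then 1 else 0) l := by
    intro i m hm l
    have := Finsupp.support_add hm
    rw [Finset.mem_union] at this
    rcases this with hm' | hm'
    · have : m = fun l => if l = i then 1 else 0 := by
        simpa using Finsupp.support_single_subset hm'
      rw [this]
    · have : m = 0 := by simpa using Finsupp.support_single_subset hm'
      rw [this]; simp
  set Tq : (Fin n → ℕ) → AddMonoidAlgebra ℂ (Fin n → ℕ) :=
    fun q => ∏ i, (Xi i) ^ q i with hTqdef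
  have hTq : ∀ (z : Fin n → ℂ) q, ev z (Tq q) = ∏ i, (z i + w i) ^ q i := by
    intro z q
    rw [hTqdef, map_prod]
    exact Finset.prod_congr rfl fun i _ => by rw [map_pow, hXi]
  have hTqsupp : ∀ q, ∀ m ∈ (Tq q).coeff.support, ∀ l, m l ≤ q l := by
    intro q m hm l
    simp only [hTqdef] at hm
    have := bound_prod Finset.univ (fun i => Xi i ^ q i)
      (fun i l' => q i * (if l' = i then 1 else 0))
      (fun i _ => bound_pow (hXisupp i) (q i)) m hm l
    calc m l ≤ ∑ i, q i * (if l = i then 1 else 0) := this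
    _ = q l := by
      rw [Finset.sum_eq_single l (fun b _ hbl => by rw [if_neg fun h => hbl h.symm, mul_zero])
        (fun h => absurd (Finset.mem_univ l) h)]
      simp
  set D : AddMonoidAlgebra ℂ (Fin n → ℕ) :=
    ∑ q ∈ c.support, AddMonoidAlgebra.single (0 : Fin n → ℕ) (c q) * Tq q with hDdef
  have hD : ∀ z, ev z D = c.sum fun q coef => coef * ∏ i, (z i + w i) ^ q i := by
    intro z
    rw [hDdef, map_sum, Finsupp.sum]
    refine Finset.sum_congr rfl fun q hq => ?_
    rw [map_mul, ev_single, hTq]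
    simp
  refine ⟨(D.erase 0).coeff, ?_, ?_⟩
  · intro r hr
    have hr' : r ∈ (D.erase 0).coeff.support := Finsupp.mem_support_iff.mpr hr
    rw [AddMonoidAlgebra.coeff_erase, Finsupp.support_erase, Finset.mem_erase] at hr'
    obtain ⟨hr0, hrD⟩ := hr'
    rw [hDdef, AddMonoidAlgebra.coeff_sum] at hrD
    obtain ⟨q, hqmem, hrq⟩ := Finsupp.mem_support_finset_sum r hrD
    obtain ⟨m1, hm1, m2, hm2, rfl⟩ := mem_support_mul hrq
    have hm10 : m1 = 0 := by simpa using Finsupp.support_single_subset hm1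
    subst hm10
    rw [zero_add] at hr0 ⊢
    obtain ⟨⟨hq0, p, hp, hqlep⟩, hqs⟩ := hc q (Finsupp.mem_support_iff.mp hqmem)
    refine ⟨⟨hr0, p, hp, fun l => le_trans (hTqsupp q m2 hm2 l) (hqlep l)⟩, ?_⟩
    intro i hi
    have := hTqsupp q m2 hm2 i
    rw [hqs i hi] at this
    omega
  · intro z
    have h2 : (c.sum fun q coef => coef * ∏ i, w i ^ q i) = D.coeff 0 := by
      rw [← ev_zero D, hD]
      exact Finsupp.sum_congr fun q _ => by simp
    have h3 : ev z D = D.coeff 0 + ev z (D.erase 0) := by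
      conv_lhs => rw [← AddMonoidAlgebra.single_add_erase 0 D]
      rw [map_add, ev_single]
      simp
    rw [← hD z, h2, ← ev_apply', h3]
    ring
end
section
variable {n : ℕ}

lemma sum_eval_smul (b : ℂ) (c : (Fin n → ℕ) →₀ ℂ) (z : Fin n → ℂ) :
    ((b • c).sum fun q coef => coef * ∏ i, z i ^ q i)
      = b * c.sum fun q coef => coef * ∏ i, z i ^ q i := by
  have h := Finsupp.sum_smul_index (g := c) (b := b)
    (h := fun q coef => coef * ∏ i, z i ^ q i) (fun q => zero_mul _)
  rw [h, Finsupp.mul_sum]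
  exact Finsupp.sum_congr fun q _ => mul_assoc _ _ _

lemma sum_eval_add (c c' : (Fin n → ℕ) →₀ ℂ) (z : Fin n → ℂ) :
    ((c + c').sum fun q coef => coef * ∏ i, z i ^ q i)
      = (c.sum fun q coef => coef * ∏ i, z i ^ q i)
        + c'.sum fun q coef => coef * ∏ i, z i ^ q i :=
  Finsupp.sum_add_index' (fun q => zero_mul _) (fun q a b => add_mul a b _)

lemma subres_id {β : Fin n → ℂ} : IsSubResonant β (fun z : Fin n → ℂ => z) := by
  refine ⟨fun _ => 1, fun _ => 0, fun _ => one_ne_zero, by simp, fun z j => by simp⟩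

lemma subres_zero {β : Fin n → ℂ} {P : (Fin n → ℂ) → (Fin n → ℂ)}
    (hP : IsSubResonant β P) : P 0 = 0 := by
  obtain ⟨a, c, ha, hcnd, hPeq⟩ := hP
  funext j
  rw [Pi.zero_apply, hPeq 0 j, Pi.zero_apply, mul_zero, zero_add]
  rw [Finsupp.sum]
  refine Finset.sum_eq_zero fun q hq => ?_
  have hq0 : q ≠ 0 := (hcnd j q (Finsupp.mem_support_iff.mp hq)).1.1
  have : ∏ i, (0 : Fin n → ℂ) i ^ q i = 0 := by
    simp only [Pi.zero_apply]
    exact prod_zero_pow hq0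
  rw [this, mul_zero]

lemma subres_comp {β : Fin n → ℂ} (h1 : ∀ i, ‖β i‖ < 1)
    {P Q : (Fin n → ℂ) → (Fin n → ℂ)}
    (hP : IsSubResonant β P) (hQ : IsSubResonant β Q) :
    IsSubResonant β (fun z => P (Q z)) := by
  obtain ⟨a, c, ha, hcnd, hPeq⟩ := hP
  obtain ⟨b, d, hb, hd, hQeq⟩ := hQ
  have hQ' : IsSubResonant β Q := ⟨b, d, hb, hd, hQeq⟩
  choose c' hc'1 hc'2 using fun j => subst_poly h1 j (c j) (hcnd j) hQ'
  refine ⟨fun j => a j * b j, fun j => a j • d j + c' j,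
    fun j => mul_ne_zero (ha j) (hb j), ?_, ?_⟩
  · intro j q hq
    rw [Finsupp.add_apply, Finsupp.smul_apply] at hq
    by_cases hdq : d j q = 0
    · rw [hdq, smul_zero, zero_add] at hq
      exact hc'1 j q hq
    · exact hd j q hdq
  · intro z j
    show P (Q z) j = a j * b j * z j
      + ((a j • d j + c' j).sum fun q coef => coef * ∏ i, z i ^ q i)
    rw [hPeq (Q z) j, hQeq z j, hc'2 j z, sum_eval_add, sum_eval_smul]
    ring

lemma subres_transl {β : Fin n → ℂ} {P : (Fin n → ℂ) → (Fin n → ℂ)}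
    (hP : IsSubResonant β P) (w : Fin n → ℂ) :
    IsSubResonant β (fun u => P (u + w) - P w) := by
  obtain ⟨a, c, ha, hcnd, hPeq⟩ := hP
  choose c' hc'1 hc'2 using fun j => transl_poly j (c j) (hcnd j) w
  refine ⟨a, c', ha, hc'1, ?_⟩
  intro z j
  have key := hc'2 j z
  show (P (z + w) - P w) j = _
  rw [Pi.sub_apply, hPeq (z + w) j, hPeq w j]
  simp only [Pi.add_apply]
  rw [← key]
  ring

lemma subres_inv {β : Fin n → ℂ} (h1 : ∀ i, ‖β i‖ < 1)
    (P : Equiv.Perm (Fin n → ℂ)) (hP : IsSubResonant β ⇑P) :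
    IsSubResonant β ⇑P.symm := by
  obtain ⟨a, c, ha, hcnd, hPeq⟩ := hP
  set Qf : ℕ → (Fin n → ℂ) → (Fin n → ℂ) := fun k =>
    Nat.rec (fun z j => (a j)⁻¹ * z j)
      (fun _ Qprev z j =>
        (a j)⁻¹ * (z j - (c j).sum fun q coef => coef * ∏ i, Qprev z i ^ q i)) k
    with hQfdef
  have hQfs : ∀ (k : ℕ) (z : Fin n → ℂ) (j : Fin n),
      Qf (k+1) z j
        = (a j)⁻¹ * (z j - (c j).sum fun q coef => coef * ∏ i, Qf k z i ^ q i) :=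
    fun k z j => rfl
  have hsub : ∀ k, IsSubResonant β (Qf k) := by
    intro k
    induction k with
    | zero =>
      exact ⟨fun j => (a j)⁻¹, fun _ => 0, fun j => inv_ne_zero (ha j), by simp,
        fun z j => by simp [hQfdef]⟩
    | succ k ih =>
      choose c' hc'1 hc'2 using fun j => subst_poly h1 j (c j) (hcnd j) ih
      refine ⟨fun j => (a j)⁻¹, fun j => (-(a j)⁻¹) • c' j,
        fun j => inv_ne_zero (ha j), ?_, ?_⟩
      · intro j q hq
        rw [Finsupp.smul_apply] at hq
        by_cases hcq : c' j q = 0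
        · rw [hcq, smul_zero] at hq; exact absurd rfl hq
        · exact hc'1 j q hcq
      · intro z j
        rw [hQfs k z j, hc'2 j z, sum_eval_smul]
        ring
  have hcorrect : ∀ k (j : Fin n), (j : ℕ) < k → ∀ z, Qf k z j = P.symm z j := by
    intro k
    induction k with
    | zero => intro j hj; omega
    | succ k ih =>
      intro j hj z
      have hNeq : ((c j).sum fun q coef => coef * ∏ i, Qf k z i ^ q i)
          = (c j).sum fun q coef => coef * ∏ i, P.symm z i ^ q i := by
        refine Finsupp.sum_congr fun q hq => ?_
        congr 1
        refine Finset.prod_congr rfl fun i _ => ?_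
        by_cases hqi : q i = 0
        · rw [hqi, pow_zero, pow_zero]
        · have hij : i < j :=
            not_le.mp fun h => hqi ((hcnd j q (Finsupp.mem_support_iff.mp hq)).2 i h)
          have hik : (i : ℕ) < k := by
            have h1' : (i : ℕ) < (j : ℕ) := hij
            omega
          rw [ih i hik z]
      have hz : z j = a j * P.symm z j
          + (c j).sum fun q coef => coef * ∏ i, P.symm z i ^ q i := by
        conv_lhs => rw [← P.apply_symm_apply z]
        exact hPeq (P.symm z) j
      rw [hQfs k z j, hNeq, hz, add_sub_cancel_right, inv_mul_cancel_left₀ (ha j)]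
  have hfin : ⇑P.symm = Qf n := funext fun z => funext fun j => (hcorrect n j j.isLt z).symm
  rw [hfin]
  exact hsub n
end
end SubResAux

open SubResAux in
/-- let `G̃` be the subgroup of `Aut(ℂⁿ)` generated by `G^r_β` and
the translations. Then every element of `G̃` is uniquely of the form
`θ_z ∘ P` with `P ∈ G^r_β` (i.e. `ρ : (z, P) ↦ θ_z ∘ P` is a bijection onto
`G̃`), and under this identification the group law reads
`(z,P)·(w,Q) = (z + P(w), θ_{−P(w)} ∘ P ∘ θ_w ∘ Q)`. -/
theorem semidirect_product_structure {n : ℕ} (β : Fin n → ℂ)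
    (h1 : ∀ i, ‖β i‖ < 1)
    (hpos : ∀ i, 0 < ‖β i‖)
    (hmono : ∀ i j : Fin n, i ≤ j → ‖β j‖ ≤ ‖β i‖) :
    (∀ g : Equiv.Perm (Fin n → ℂ),
      g ∈ Subgroup.closure
          ({h : Equiv.Perm (Fin n → ℂ) | IsSubResonant β ⇑h} ∪
           {h : Equiv.Perm (Fin n → ℂ) | ∃ w, ∀ v, h v = v + w}) ↔
      ∃! x : (Fin n → ℂ) × {P : Equiv.Perm (Fin n → ℂ) // IsSubResonant β ⇑P},
        ∀ v, g v = x.1 + x.2.1 v) ∧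
    (∀ (z w : Fin n → ℂ) (P Q : Equiv.Perm (Fin n → ℂ)),
      IsSubResonant β ⇑P → IsSubResonant β ⇑Q →
      (∀ v, z + P (w + Q v) = (z + P w) + (fun u => P (u + w) - P w) (Q v)) ∧
        IsSubResonant β (fun u => P (u + w) - P w)) := by
  constructor
  · intro g
    constructor
    · intro hg
      have hex : ∃ z : Fin n → ℂ, ∃ P : Equiv.Perm (Fin n → ℂ),
          IsSubResonant β ⇑P ∧ ∀ v, g v = z + P v := by
        induction hg using Subgroup.closure_induction with
        | mem x hx =>
          rcases hx with hx | hx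
          · exact ⟨0, x, hx, fun v => (zero_add _).symm⟩
          · obtain ⟨w, hw⟩ := hx
            refine ⟨w, 1, ?_, fun v => by rw [hw v, Equiv.Perm.coe_one, id_eq, add_comm]⟩
            have : ⇑(1 : Equiv.Perm (Fin n → ℂ)) = fun z : Fin n → ℂ => z := rfl
            rw [this]; exact subres_id
        | one =>
          refine ⟨0, 1, ?_, fun v => by simp⟩
          have : ⇑(1 : Equiv.Perm (Fin n → ℂ)) = fun z : Fin n → ℂ => z := rfl
          rw [this]; exact subres_id
        | mul x y hx hy px py =>
          obtain ⟨z, P, hP, hPv⟩ := px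
          obtain ⟨w, Q, hQ, hQv⟩ := py
          set T : Equiv.Perm (Fin n → ℂ) :=
            Q.trans ((Equiv.addRight w).trans (P.trans (Equiv.addRight (-(P w))))) with hTdef
          have hTco : ⇑T = fun v => (fun u => P (u + w) - P w) (Q v) := by
            funext v
            simp only [hTdef, Equiv.trans_apply, Equiv.coe_addRight]
            rw [sub_eq_add_neg]
          refine ⟨z + P w, T, ?_, ?_⟩
          · rw [hTco]
            exact subres_comp h1 (subres_transl hP w) hQ
          · intro v
            have : (x * y) v = x (y v) := rfl
            rw [this, hPv (y v), hQv v, hTco]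
            simp only []
            rw [add_comm w (Q v)]
            abel
        | inv x hx px =>
          obtain ⟨z, P, hP, hPv⟩ := px
          set T : Equiv.Perm (Fin n → ℂ) :=
            (Equiv.addRight (-z)).trans (P.symm.trans (Equiv.addRight (-(P.symm (-z))))) with hTdef
          have hTco : ⇑T = fun v => P.symm (v + -z) - P.symm (-z) := by
            funext v
            simp only [hTdef, Equiv.trans_apply, Equiv.coe_addRight]
            rw [sub_eq_add_neg]
          refine ⟨P.symm (-z), T, ?_, ?_⟩
          · rw [hTco]
            have := subres_transl (subres_inv h1 P hP) (-z)
            exact this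
          · intro v
            have hxv : x (P.symm (v - z)) = v := by
              rw [hPv (P.symm (v - z)), Equiv.apply_symm_apply]
              abel
            have : x⁻¹ v = P.symm (v - z) := by
              conv_lhs => rw [← hxv]
              exact Equiv.symm_apply_apply x _
            rw [this, hTco]
            simp only []
            rw [sub_eq_add_neg v z]
            abel
      obtain ⟨z, P, hP, hgv⟩ := hex
      refine ⟨⟨z, ⟨P, hP⟩⟩, hgv, ?_⟩
      rintro ⟨z', P'⟩ h'
      have hz : z' = z := by
        have h0 := h' 0
        have h0' := hgv 0
        rw [subres_zero hP] at h0'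
        rw [subres_zero P'.2] at h0
        rw [h0', add_zero] at h0
        rw [add_zero] at h0
        exact h0.symm
      subst hz
      have hPP : P'.1 = P := by
        apply Equiv.ext
        intro v
        have := (h' v).symm.trans (hgv v)
        exact add_left_cancel this
      have : P' = ⟨P, hP⟩ := Subtype.ext hPP
      rw [this]
    · rintro ⟨⟨z, P⟩, hx, -⟩
      have hgeq : g = (Equiv.addLeft z : Equiv.Perm (Fin n → ℂ)) * P.1 := by
        apply Equiv.ext
        intro v
        rw [hx v]
        rfl
      rw [hgeq]
      refine Subgroup.mul_mem _ ?_ ?_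
      · exact Subgroup.subset_closure (Or.inr ⟨z, fun v => by
          simp [Equiv.coe_addLeft, add_comm]⟩)
      · exact Subgroup.subset_closure (Or.inl P.2)
  · intro z w P Q hP hQ
    refine ⟨?_, subres_transl hP w⟩
    intro v
    simp only []
    rw [add_comm w (Q v)]
    abel
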